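/- Let (a_1, ..., a_m) be a telescopic sequence of positive integers (so gcd(a_1,...,a_m) = 1) and let S_m be the numerical semigroup it generates. Then the number of gaps of S_m is g(S_m) = (1 + Σ_{i=1}^{m} (d_{i-1}/d_i - 1) a_i)/2, where d_i = gcd(a_1, ..., a_i), d_0 = 0, and the i = 1 term of the sum equals -a_1. In particular, if S_m ≠ ℕ then the largest gap of S_m equals 2·g(S_m) - 1, i.e., telescopic numerical semigroups are symmetric. -/

import Mathlib

/-- `seqGcd a i = d_i = gcd(a_1, …, a_i)` (so `seqGcd a 0 = 0`). -/
def seqGcd (a : ℕ → ℕ) (i : ℕ) : ℕ := Finset.gcd (Finset.Icc 1 i) a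

/-- `seqSemigroup a i = S_i`, the submonoid of `ℕ` generated by `{a_1/d_i, …, a_i/d_i}`. -/
def seqSemigroup (a : ℕ → ℕ) (i : ℕ) : AddSubmonoid ℕ :=
  AddSubmonoid.closure ((fun j => a j / seqGcd a i) '' Set.Icc 1 i)


structure Good (S : AddSubmonoid ℕ) (F : ℤ) : Prop where
  fin : {x : ℕ | x ∉ S}.Finite
  sym : F = 2 * ({x : ℕ | x ∉ S}.ncard : ℤ) - 1
  bound : ∀ x : ℕ, F < (x : ℤ) → x ∈ S
  frob : ∀ x : ℕ, (x : ℤ) = F → x ∉ S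

section Glue
variable {T S : AddSubmonoid ℕ} {c b : ℕ}

lemma memS_iff (hc : 0 < c) (hbT : b ∈ T) (hcop : Nat.Coprime c b)
    (hS : ∀ x : ℕ, x ∈ S ↔ ∃ t ∈ T, ∃ n : ℕ, x = c * t + n * b)
    (x n : ℕ) (hn : n < c) (hmod : x % c = (n * b) % c) :
    x ∈ S ↔ n * b ≤ x ∧ (x - n * b) / c ∈ T := by
  constructor
  · intro hx
    obtain ⟨t, ht, n', rfl⟩ := (hS _).mp hx
    have h1 : (n' * b) % c = (n * b) % c := by
      rw [← hmod, Nat.mul_comm c t, Nat.add_comm, Nat.add_mul_mod_self_right]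
    have h2 : n' % c = n % c := Nat.ModEq.cancel_right_of_coprime hcop h1
    have h3 : n' % c = n := by rw [h2, Nat.mod_eq_of_lt hn]
    obtain ⟨q, hq⟩ : ∃ q, n' = c * q + n := ⟨n' / c, by rw [← h3]; exact (Nat.div_add_mod n' c).symm⟩
    have hx2 : c * t + n' * b = c * (t + q * b) + n * b := by rw [hq]; ring
    have hmem : t + q * b ∈ T := by
      refine add_mem ht ?_
      simpa [nsmul_eq_mul] using T.nsmul_mem hbT q
    constructor
    · omega
    · have h5 : c * t + n' * b - n * b = c * (t + q * b) := by omega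
      rw [h5, Nat.mul_div_cancel_left _ hc]; exact hmem
  · rintro ⟨hle, ht⟩
    have hdvd : c ∣ x - n * b := (Nat.modEq_iff_dvd' hle).mp hmod.symm
    have h5 : c * ((x - n * b) / c) = x - n * b := Nat.mul_div_cancel' hdvd
    have hx : x = c * ((x - n * b) / c) + n * b := by omega
    exact (hS x).mpr ⟨_, ht, n, hx⟩

lemma res_inj (hcop : Nat.Coprime c b) :
    ∀ n₁ ∈ Finset.range c, ∀ n₂ ∈ Finset.range c,
      (n₁ * b) % c = (n₂ * b) % c → n₁ = n₂ := by
  intro n₁ h1 n₂ h2 h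
  have := Nat.ModEq.cancel_right_of_coprime hcop h
  simp only [Finset.mem_range] at h1 h2
  rwa [Nat.ModEq, Nat.mod_eq_of_lt h1, Nat.mod_eq_of_lt h2] at this

lemma exists_res (hc : 0 < c) (hcop : Nat.Coprime c b) (x : ℕ) :
    ∃ n, n < c ∧ x % c = (n * b) % c := by
  have hmaps : ∀ n ∈ Finset.range c, (n * b) % c ∈ Finset.range c := fun n _ =>
    Finset.mem_range.mpr (Nat.mod_lt _ hc)
  obtain ⟨n, hn, he⟩ := Finset.surj_on_of_inj_on_of_card_le
    (s := Finset.range c) (t := Finset.range c) (fun n _ => (n * b) % c)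
    hmaps (fun n₁ n₂ h1 h2 h => res_inj hcop n₁ h1 n₂ h2 h) le_rfl
    (x % c) (Finset.mem_range.mpr (Nat.mod_lt _ hc))
  exact ⟨n, Finset.mem_range.mp hn, he⟩

lemma sum_mod (hcop : Nat.Coprime c b) :
    ∑ n ∈ Finset.range c, (n * b) % c = ∑ n ∈ Finset.range c, n := by
  rcases Nat.eq_zero_or_pos c with rfl | hc
  · simp
  have himg : (Finset.range c).image (fun n => (n * b) % c) = Finset.range c := by
    apply Finset.eq_of_subset_of_card_le
    · intro y hy
      obtain ⟨n, _, rfl⟩ := Finset.mem_image.mp hy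
      exact Finset.mem_range.mpr (Nat.mod_lt _ hc)
    · rw [Finset.card_image_of_injOn fun n₁ h1 n₂ h2 h => res_inj hcop n₁ h1 n₂ h2 h]
  calc ∑ n ∈ Finset.range c, (n * b) % c
      = ∑ y ∈ (Finset.range c).image (fun n => (n * b) % c), y := by
        rw [Finset.sum_image fun n₁ h1 n₂ h2 h => res_inj hcop n₁ h1 n₂ h2 h]
    _ = ∑ n ∈ Finset.range c, n := by rw [himg]

lemma sum_floor (hc : 0 < c) (hb0 : 0 < b) (hcop : Nat.Coprime c b) :
    2 * ((∑ n ∈ Finset.range c, (n * b) / c : ℕ) : ℤ) = ((b : ℤ) - 1) * ((c : ℤ) - 1) := by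
  have e1 : ∑ n ∈ Finset.range c, (c * ((n * b) / c) + (n * b) % c)
      = ∑ n ∈ Finset.range c, n * b :=
    Finset.sum_congr rfl fun n _ => Nat.div_add_mod (n * b) c
  rw [Finset.sum_add_distrib, ← Finset.mul_sum, sum_mod hcop, ← Finset.sum_mul] at e1
  have gauss : (∑ n ∈ Finset.range c, n) * 2 = c * (c - 1) := Finset.sum_range_id_mul_two c
  set Q := ∑ n ∈ Finset.range c, (n * b) / c
  set s := ∑ n ∈ Finset.range c, n
  have e2 : (c : ℤ) * Q + s = s * b := by exact_mod_cast e1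
  have gauss' : (s : ℤ) * 2 = c * ((c : ℤ) - 1) := by
    have : ((c * (c - 1) : ℕ) : ℤ) = (c : ℤ) * ((c : ℤ) - 1) := by
      push_cast [Nat.cast_sub hc]; ring
    rw [← gauss] at this; exact_mod_cast this
  have key : (c : ℤ) * (2 * Q) = (c : ℤ) * (((b : ℤ) - 1) * ((c : ℤ) - 1)) := by
    linear_combination 2 * e2 + ((b : ℤ) - 1) * gauss'
  exact mul_left_cancel₀ (by exact_mod_cast hc.ne' : (c : ℤ) ≠ 0) key
end Glue

section Glue2
variable {T S : AddSubmonoid ℕ} {c b : ℕ}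

lemma glue (hc : 0 < c) (hb0 : 0 < b) (hbT : b ∈ T) (hcop : Nat.Coprime c b)
    (hS : ∀ x : ℕ, x ∈ S ↔ ∃ t ∈ T, ∃ n : ℕ, x = c * t + n * b)
    {F : ℤ} (hT : Good T F) :
    Good S (c * F + ((c : ℤ) - 1) * b) ∧
    2 * ({x : ℕ | x ∉ S}.ncard : ℤ)
      = 2 * c * ({x : ℕ | x ∉ T}.ncard : ℤ) + ((c : ℤ) - 1) * ((b : ℤ) - 1) := by
  classical
  set GT : Finset ℕ := hT.fin.toFinset with hGT
  set blk : ℕ → Finset ℕ := fun n =>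
    GT.image (fun y => n * b + c * y) ∪
      (Finset.range (n * b / c)).image (fun j => n * b % c + c * j) with hblk
  set gapsS : Finset ℕ := (Finset.range c).biUnion blk with hgapsS
  have hmodblk : ∀ n, ∀ x ∈ blk n, x % c = (n * b) % c := by
    intro n x hx
    rw [hblk, Finset.mem_union] at hx
    rcases hx with hx | hx
    · obtain ⟨y, _, rfl⟩ := Finset.mem_image.mp hx
      simp [Nat.add_mul_mod_self_left]
    · obtain ⟨j, _, rfl⟩ := Finset.mem_image.mp hx
      simp [Nat.add_mul_mod_self_left, Nat.mod_mod_of_dvd]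
  have hsmall : ∀ n, ∀ x ∈ (Finset.range (n * b / c)).image (fun j => n * b % c + c * j),
      x < n * b := by
    intro n x hx
    obtain ⟨j, hj, rfl⟩ := Finset.mem_image.mp hx
    rw [Finset.mem_range] at hj
    have e1 : c * (n * b / c) + n * b % c = n * b := Nat.div_add_mod _ _
    have e2 : c * (j + 1) ≤ c * (n * b / c) := Nat.mul_le_mul_left c hj
    have e3 : c * (j + 1) = c * j + c := by ring
    linarith
  have hbig : ∀ n, ∀ x ∈ GT.image (fun y => n * b + c * y), n * b ≤ x := by
    intro n x hx
    obtain ⟨y, _, rfl⟩ := Finset.mem_image.mp hx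
    exact Nat.le_add_right _ _
  -- the set of gaps of S is exactly gapsS
  have hset : {x : ℕ | x ∉ S} = ↑gapsS := by
    ext x
    simp only [Set.mem_setOf_eq, Finset.coe_biUnion, Finset.coe_sort_coe, Set.mem_iUnion,
      Finset.mem_coe, hgapsS, Finset.mem_biUnion]
    constructor
    · intro hx
      obtain ⟨n, hn, hmod⟩ := exists_res hc hcop x
      rw [memS_iff hc hbT hcop hS x n hn hmod] at hx
      push_neg at hx
      refine ⟨n, Finset.mem_range.mpr hn, ?_⟩
      rw [hblk, Finset.mem_union]
      by_cases hle : n * b ≤ x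
      · left
        have hdvd : c ∣ x - n * b := (Nat.modEq_iff_dvd' hle).mp hmod.symm
        have h5 : c * ((x - n * b) / c) = x - n * b := Nat.mul_div_cancel' hdvd
        refine Finset.mem_image.mpr ⟨(x - n * b) / c, ?_, ?_⟩
        · rw [hGT, Set.Finite.mem_toFinset]; exact hx hle
        · show n * b + c * ((x - n * b) / c) = x
          omega
      · right
        push_neg at hle
        have h1 : c * (x / c) + n * b % c = x := by rw [← hmod]; exact Nat.div_add_mod x c
        have h2 : c * (n * b / c) + n * b % c = n * b := Nat.div_add_mod _ _
        have h3 : c * (x / c) + n * b % c < c * (n * b / c) + n * b % c := by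
          rw [h1, h2]; exact hle
        have h4 : x / c < n * b / c := Nat.lt_of_mul_lt_mul_left (Nat.lt_of_add_lt_add_right h3)
        refine Finset.mem_image.mpr ⟨x / c, Finset.mem_range.mpr h4, ?_⟩
        show n * b % c + c * (x / c) = x
        omega
    · rintro ⟨n, hn, hxblk⟩
      rw [Finset.mem_range] at hn
      have hmod := hmodblk n x hxblk
      rw [memS_iff hc hbT hcop hS x n hn hmod]
      rw [hblk, Finset.mem_union] at hxblk
      rcases hxblk with hx | hx
      · obtain ⟨y, hy, rfl⟩ := Finset.mem_image.mp hx
        rw [hGT, Set.Finite.mem_toFinset] at hy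
        rintro ⟨-, hmem⟩
        have : n * b + c * y - n * b = c * y := by omega
        rw [this, Nat.mul_div_cancel_left _ hc] at hmem
        exact hy hmem
      · have := hsmall n x hx
        rintro ⟨hle, -⟩
        omega
  -- cardinality of the gaps
  have hblkcard : ∀ n ∈ Finset.range c, (blk n).card = GT.card + n * b / c := by
    intro n _
    rw [hblk]
    simp only []
    rw [Finset.card_union_of_disjoint, Finset.card_image_of_injective _
        (fun y₁ y₂ h => Nat.eq_of_mul_eq_mul_left hc (Nat.add_left_cancel h)),
      Finset.card_image_of_injective _
        (fun j₁ j₂ h => Nat.eq_of_mul_eq_mul_left hc (Nat.add_left_cancel h)),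
      Finset.card_range]
    · rw [Finset.disjoint_left]
      intro x hx1 hx2
      exact absurd (hsmall n x hx2) (not_lt.mpr (hbig n x hx1))
  have hdisj : ∀ n₁ ∈ Finset.range c, ∀ n₂ ∈ Finset.range c, n₁ ≠ n₂ →
      Disjoint (blk n₁) (blk n₂) := by
    intro n₁ h1 n₂ h2 hne
    rw [Finset.disjoint_left]
    intro x hx1 hx2
    exact hne (res_inj hcop n₁ h1 n₂ h2 ((hmodblk n₁ x hx1).symm.trans (hmodblk n₂ x hx2)))
  have hcard : gapsS.card = c * GT.card + ∑ n ∈ Finset.range c, n * b / c := by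
    rw [hgapsS, Finset.card_biUnion hdisj, Finset.sum_congr rfl hblkcard,
      Finset.sum_add_distrib, Finset.sum_const, Finset.card_range, smul_eq_mul]
  have hnS : {x : ℕ | x ∉ S}.ncard = gapsS.card := by
    rw [hset, Set.ncard_coe_finset]
  have hnT : {x : ℕ | x ∉ T}.ncard = GT.card := Set.ncard_eq_toFinset_card _ hT.fin
  have hcount : 2 * ({x : ℕ | x ∉ S}.ncard : ℤ)
      = 2 * c * ({x : ℕ | x ∉ T}.ncard : ℤ) + ((c : ℤ) - 1) * ((b : ℤ) - 1) := by
    rw [hnS, hcard, hnT]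
    push_cast
    rw [mul_add]
    have := sum_floor hc hb0 hcop
    push_cast at this
    linarith [this]
  refine ⟨⟨?_, ?_, ?_, ?_⟩, hcount⟩
  · rw [hset]; exact gapsS.finite_toSet
  · have hsym := hT.sym
    linear_combination (c : ℤ) * hsym - hcount
  · -- bound
    intro x hx
    obtain ⟨n, hn, hmod⟩ := exists_res hc hcop x
    have hF1 : -1 ≤ F := by
      have h0 : (0 : ℤ) ≤ ({x : ℕ | x ∉ T}.ncard : ℤ) := Int.natCast_nonneg _
      have := hT.sym
      omega
    have hnc : (n : ℤ) ≤ (c : ℤ) - 1 := by omega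
    have hnbc : (n : ℤ) * b ≤ ((c : ℤ) - 1) * b :=
      mul_le_mul_of_nonneg_right hnc (by positivity)
    have hcF : (c : ℤ) * (-1) ≤ (c : ℤ) * F :=
      mul_le_mul_of_nonneg_left hF1 (by positivity)
    have hxnb : n * b ≤ x := by
      by_contra hlt
      push_neg at hlt
      have hdvd : c ∣ n * b - x := (Nat.modEq_iff_dvd' hlt.le).mp hmod
      have hge : c ≤ n * b - x := Nat.le_of_dvd (by omega) hdvd
      have h1 : x + c ≤ n * b := by omega
      have h2 : (x : ℤ) + c ≤ (n : ℤ) * b := by exact_mod_cast h1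
      linarith
    rw [memS_iff hc hbT hcop hS x n hn hmod]
    refine ⟨hxnb, ?_⟩
    have hdvd : c ∣ x - n * b := (Nat.modEq_iff_dvd' hxnb).mp hmod.symm
    have h5 : c * ((x - n * b) / c) = x - n * b := Nat.mul_div_cancel' hdvd
    apply hT.bound
    have h6 : (c : ℤ) * (((x - n * b) / c : ℕ) : ℤ) = (x : ℤ) - (n : ℤ) * b := by
      calc (c : ℤ) * (((x - n * b) / c : ℕ) : ℤ)
          = ((c * ((x - n * b) / c) : ℕ) : ℤ) := by push_cast; ring
        _ = ((x - n * b : ℕ) : ℤ) := by rw [h5]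
        _ = (x : ℤ) - (n : ℤ) * b := by rw [Nat.cast_sub hxnb]; push_cast; ring
    have h7 : (c : ℤ) * F < (c : ℤ) * (((x - n * b) / c : ℕ) : ℤ) := by
      rw [h6]; linarith
    exact lt_of_mul_lt_mul_left h7 (by positivity)
  · -- frob
    intro x hx hxS
    have hn : c - 1 < c := by omega
    rcases le_or_gt 0 F with hF | hF
    · have hxn : x = c * F.toNat + (c - 1) * b := by
        have : (x : ℤ) = (c : ℤ) * F.toNat + ((c - 1 : ℕ) : ℤ) * b := by
          rw [Int.toNat_of_nonneg hF]
          push_cast [Nat.cast_sub hc]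
          linarith [hx]
        exact_mod_cast this
      have hmod : x % c = ((c - 1) * b) % c := by rw [hxn, Nat.mul_add_mod]
      rw [memS_iff hc hbT hcop hS x (c - 1) hn hmod] at hxS
      obtain ⟨hle, hmem⟩ := hxS
      have : x - (c - 1) * b = c * F.toNat := by rw [hxn, Nat.add_sub_cancel]
      rw [this, Nat.mul_div_cancel_left _ hc] at hmem
      exact hT.frob F.toNat (Int.toNat_of_nonneg hF) hmem
    · have hFm1 : F = -1 := by
        have := hT.sym
        have h0 : (0 : ℤ) ≤ ({x : ℕ | x ∉ T}.ncard : ℤ) := Int.natCast_nonneg _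
        omega
      have hxn : x + c = (c - 1) * b := by
        have : (x : ℤ) + c = ((c - 1 : ℕ) : ℤ) * b := by
          push_cast [Nat.cast_sub hc]
          rw [hx, hFm1]; ring
        exact_mod_cast this
      have hmod : x % c = ((c - 1) * b) % c := by
        rw [← hxn, Nat.add_mod_right]
      rw [memS_iff hc hbT hcop hS x (c - 1) hn hmod] at hxS
      obtain ⟨hle, -⟩ := hxS
      omega
end Glue2

lemma seqGcd_zero (a : ℕ → ℕ) : seqGcd a 0 = 0 := by
  unfold seqGcd
  rw [show Finset.Icc 1 0 = ∅ from rfl, Finset.gcd_empty]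

lemma seqGcd_succ (a : ℕ → ℕ) (i : ℕ) :
    seqGcd a (i + 1) = Nat.gcd (a (i + 1)) (seqGcd a i) := by
  unfold seqGcd
  rw [← Finset.insert_Icc_right_eq_Icc_add_one (by omega), Finset.gcd_insert]
  rfl

lemma seqGcd_one (a : ℕ → ℕ) : seqGcd a 1 = a 1 := by
  rw [show (1 : ℕ) = 0 + 1 from rfl, seqGcd_succ, seqGcd_zero, Nat.gcd_zero_right]

lemma seqGcd_dvd (a : ℕ → ℕ) {i j : ℕ} (h1 : 1 ≤ j) (h2 : j ≤ i) : seqGcd a i ∣ a j :=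
  Finset.gcd_dvd (Finset.mem_Icc.mpr ⟨h1, h2⟩)

lemma seqGcd_pos (a : ℕ → ℕ) {i : ℕ} (ha : 0 < a 1) (hi : 1 ≤ i) : 0 < seqGcd a i :=
  Nat.pos_of_dvd_of_pos (seqGcd_dvd a le_rfl hi) ha

lemma seqGcd_dvd_pred (a : ℕ → ℕ) (i : ℕ) : seqGcd a (i + 1) ∣ seqGcd a i := by
  rw [seqGcd_succ]; exact Nat.gcd_dvd_right _ _

/-- exact division compatibility -/
lemma div_div_eq {d d' x : ℕ} (hd' : 0 < d') (hdd : d' ∣ d) (hdx : d ∣ x) (hd : 0 < d) :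
    x / d' = (d / d') * (x / d) := by
  obtain ⟨c, rfl⟩ := hdd
  obtain ⟨k, hk⟩ := hdx
  subst hk
  have h1 : d' * c * k / d' = c * k := by rw [mul_assoc, Nat.mul_div_cancel_left _ hd']
  have h2 : d' * c / d' = c := Nat.mul_div_cancel_left _ hd'
  have h3 : d' * c * k / (d' * c) = k := Nat.mul_div_cancel_left _ hd
  rw [h1, h2, h3]

lemma seqSemigroup_one (a : ℕ → ℕ) (ha : 0 < a 1) : seqSemigroup a 1 = ⊤ := by
  unfold seqSemigroup
  have himg : (fun j => a j / seqGcd a 1) '' Set.Icc 1 1 = {1} := by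
    rw [Set.Icc_self, Set.image_singleton, seqGcd_one, Nat.div_self ha]
  rw [himg, eq_top_iff]
  intro x _
  simpa using AddSubmonoid.nsmul_mem (AddSubmonoid.subset_closure rfl) x

lemma seqSemigroup_step (a : ℕ → ℕ) (i : ℕ) (hi : 1 ≤ i) (ha : 0 < a 1) (x : ℕ) :
    x ∈ seqSemigroup a (i + 1) ↔
      ∃ t ∈ seqSemigroup a i, ∃ n : ℕ,
        x = (seqGcd a i / seqGcd a (i + 1)) * t + n * (a (i + 1) / seqGcd a (i + 1)) := by
  set d := seqGcd a i with hd
  set d' := seqGcd a (i + 1) with hd'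
  set c := d / d' with hc
  set b := a (i + 1) / d' with hb
  have hdpos : 0 < d := seqGcd_pos a ha hi
  have hd'pos : 0 < d' := seqGcd_pos a ha (by omega)
  have hd'd : d' ∣ d := seqGcd_dvd_pred a i
  have hexact : ∀ j, 1 ≤ j → j ≤ i → a j / d' = c * (a j / d) := fun j h1 h2 =>
    div_div_eq hd'pos hd'd (seqGcd_dvd a h1 h2) hdpos
  set R : AddSubmonoid ℕ :=
    { carrier := {x | ∃ t ∈ seqSemigroup a i, ∃ n : ℕ, x = c * t + n * b}
      zero_mem' := ⟨0, zero_mem _, 0, by ring⟩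
      add_mem' := by
        rintro x y ⟨t, ht, n, rfl⟩ ⟨t', ht', n', rfl⟩
        exact ⟨t + t', add_mem ht ht', n + n', by ring⟩ } with hR
  have key : seqSemigroup a (i + 1) = R := by
    apply le_antisymm
    · rw [seqSemigroup, AddSubmonoid.closure_le]
      rintro x ⟨j, hj, rfl⟩
      obtain ⟨hj1, hj2⟩ := hj
      rcases Nat.lt_or_ge j (i + 1) with hlt | hge
      · have hji : j ≤ i := by omega
        refine ⟨a j / d, AddSubmonoid.subset_closure ⟨j, ⟨hj1, hji⟩, rfl⟩, 0, ?_⟩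
        show a j / d' = c * (a j / d) + 0 * b
        rw [hexact j hj1 hji]; ring
      · have hji : j = i + 1 := by omega
        subst hji
        refine ⟨0, zero_mem _, 1, ?_⟩
        show a (i + 1) / d' = c * 0 + 1 * b
        rw [mul_zero, zero_add, one_mul]
    · rintro x ⟨t, ht, n, rfl⟩
      have hbmem : b ∈ seqSemigroup a (i + 1) :=
        AddSubmonoid.subset_closure ⟨i + 1, ⟨by omega, le_rfl⟩, rfl⟩
      refine add_mem ?_ ?_
      · induction ht using AddSubmonoid.closure_induction with
        | mem y hy =>
          obtain ⟨j, ⟨hj1, hj2⟩, rfl⟩ := hy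
          have heq : c * (a j / d) = a j / d' := (hexact j hj1 hj2).symm
          show c * (a j / d) ∈ seqSemigroup a (i + 1)
          rw [heq]
          exact AddSubmonoid.subset_closure ⟨j, ⟨hj1, by omega⟩, rfl⟩
        | zero => rw [mul_zero]; exact zero_mem _
        | add y z _ _ hy hz => rw [mul_add]; exact add_mem hy hz
      · simpa [nsmul_eq_mul] using (seqSemigroup a (i + 1)).nsmul_mem hbmem n
  rw [key]
  rfl

/-- Lemma 2.2 (Kirfel–Pellikaan, Lemma 6.5), genus part: for a telescopic sequence
`(a_1, …, a_m)` generating `S_m`, the number of gaps satisfies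
`2·g(S_m) = 1 + Σ_{i=1}^m (d_{i-1}/d_i - 1)·a_i` (the `i = 1` term being `-a_1`);
in particular if `S_m ≠ ℕ` the largest gap equals `2·g(S_m) - 1`, i.e. telescopic
numerical semigroups are symmetric. -/
theorem telescopic_genus_and_symmetric
    (m : ℕ) (hm : 1 ≤ m) (a : ℕ → ℕ)
    (hpos : ∀ i, 1 ≤ i → i ≤ m → 0 < a i)
    (hgcd : seqGcd a m = 1)
    (htel : ∀ i, 2 ≤ i → i ≤ m → a i / seqGcd a i ∈ seqSemigroup a (i - 1)) :
    (2 * (Set.ncard {x : ℕ | x ∉ seqSemigroup a m} : ℤ) =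
      1 + ∑ i ∈ Finset.Icc 1 m,
        ((seqGcd a (i - 1) : ℤ) / (seqGcd a i : ℤ) - 1) * (a i : ℤ)) ∧
    (seqSemigroup a m ≠ ⊤ →
      ∃ l : ℕ, IsGreatest {x : ℕ | x ∉ seqSemigroup a m} l ∧
        (l : ℤ) = 2 * (Set.ncard {x : ℕ | x ∉ seqSemigroup a m} : ℤ) - 1) := by
  have ha1 : 0 < a 1 := hpos 1 le_rfl hm
  have main : ∀ i, 1 ≤ i → i ≤ m →
      (∃ F, Good (seqSemigroup a i) F) ∧
      2 * ({x : ℕ | x ∉ seqSemigroup a i}.ncard : ℤ) =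
        1 + ∑ j ∈ Finset.Icc 1 i,
          ((seqGcd a (j - 1) : ℤ) / (seqGcd a j : ℤ) - 1) * ((a j / seqGcd a i : ℕ) : ℤ) := by
    intro i hi
    induction i, hi using Nat.le_induction with
    | base =>
      intro _
      have htop := seqSemigroup_one a ha1
      have hgaps : {x : ℕ | x ∉ seqSemigroup a 1} = ∅ := by
        rw [htop]; simp
      constructor
      · refine ⟨-1, ?_, ?_, ?_, ?_⟩
        · rw [hgaps]; exact Set.finite_empty
        · rw [hgaps]; simp
        · intro x _; rw [htop]; trivial
        · intro x hx; exact absurd hx (by omega)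
      · rw [hgaps, Finset.Icc_self, Finset.sum_singleton,
          show (1:ℕ) - 1 = 0 from rfl, seqGcd_zero, seqGcd_one, Nat.div_self ha1]
        simp
    | succ i hi ih =>
      intro him
      obtain ⟨⟨F, hGood⟩, hInv⟩ := ih (by omega)
      set d := seqGcd a i with hdd
      set d' := seqGcd a (i + 1) with hdd'
      set c := d / d' with hcc
      set b := a (i + 1) / d' with hbb
      have hdpos : 0 < d := seqGcd_pos a ha1 hi
      have hd'pos : 0 < d' := seqGcd_pos a ha1 (by omega)
      have hd'd : d' ∣ d := seqGcd_dvd_pred a i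
      have hd'a : d' ∣ a (i + 1) := by rw [hdd', seqGcd_succ]; exact Nat.gcd_dvd_left _ _
      have hc0 : 0 < c := Nat.div_pos (Nat.le_of_dvd hdpos hd'd) hd'pos
      have hb0 : 0 < b :=
        Nat.div_pos (Nat.le_of_dvd (hpos (i + 1) (by omega) him) hd'a) hd'pos
      have hgd : Nat.gcd d (a (i + 1)) = d' := by rw [hdd', seqGcd_succ, Nat.gcd_comm]
      have hcop : Nat.Coprime c b := by
        have h := Nat.coprime_div_gcd_div_gcd (m := d) (n := a (i + 1))
          (by rw [hgd]; exact hd'pos)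
        rwa [hgd] at h
      have hbT : b ∈ seqSemigroup a i := by
        have h := htel (i + 1) (by omega) him
        simpa using h
      have hS := seqSemigroup_step a i hi ha1
      obtain ⟨hGood', hcount⟩ := glue hc0 hb0 hbT hcop hS hGood
      refine ⟨⟨_, hGood'⟩, ?_⟩
      rw [Finset.sum_Icc_succ_top (by omega : 1 ≤ i + 1)]
      simp only [Nat.add_sub_cancel]
      have he : (d : ℤ) / (d' : ℤ) = (c : ℤ) := by
        obtain ⟨k, hk⟩ := hd'd
        have hkc : c = k := by rw [hcc, hk, Nat.mul_div_cancel_left _ hd'pos]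
        rw [hkc, hk]
        push_cast
        exact Int.mul_ediv_cancel_left _ (by exact_mod_cast hd'pos.ne')
      have hsum : ∑ j ∈ Finset.Icc 1 i,
          ((seqGcd a (j - 1) : ℤ) / (seqGcd a j : ℤ) - 1) * ((a j / d' : ℕ) : ℤ)
          = (c : ℤ) * ∑ j ∈ Finset.Icc 1 i,
            ((seqGcd a (j - 1) : ℤ) / (seqGcd a j : ℤ) - 1) * ((a j / d : ℕ) : ℤ) := by
        rw [Finset.mul_sum]
        refine Finset.sum_congr rfl fun j hj => ?_
        rw [Finset.mem_Icc] at hj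
        rw [div_div_eq hd'pos hd'd (seqGcd_dvd a hj.1 hj.2) hdpos, Nat.cast_mul]
        ring
      rw [hsum, he]
      linear_combination hcount + (c : ℤ) * hInv
  obtain ⟨⟨F, hGood⟩, hInv⟩ := main m hm le_rfl
  have hInv' : 2 * ({x : ℕ | x ∉ seqSemigroup a m}.ncard : ℤ) =
      1 + ∑ i ∈ Finset.Icc 1 m,
        ((seqGcd a (i - 1) : ℤ) / (seqGcd a i : ℤ) - 1) * (a i : ℤ) := by
    rw [hInv]
    congr 1
    refine Finset.sum_congr rfl fun j hj => ?_
    rw [hgcd, Nat.div_one]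
  refine ⟨hInv', ?_⟩
  intro hne
  have hnonempty : {x : ℕ | x ∉ seqSemigroup a m}.Nonempty := by
    by_contra h
    rw [Set.not_nonempty_iff_eq_empty] at h
    apply hne
    rw [eq_top_iff]
    intro x _
    by_contra hx
    exact (h ▸ (Set.mem_setOf.mpr hx : x ∈ {x : ℕ | x ∉ seqSemigroup a m}) : x ∈ (∅ : Set ℕ))
  have hpos' : 0 < {x : ℕ | x ∉ seqSemigroup a m}.ncard :=
    (Set.ncard_pos hGood.fin).mpr hnonempty
  have hF0 : 0 ≤ F := by
    have hs := hGood.sym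
    omega
  refine ⟨F.toNat, ⟨hGood.frob F.toNat (Int.toNat_of_nonneg hF0), ?_⟩, ?_⟩
  · intro x hx
    by_contra hlt
    push_neg at hlt
    exact hx (hGood.bound x (by omega))
  · rw [Int.toNat_of_nonneg hF0, hGood.sym]
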